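/- Let Y be a topological space, n ≥ 1, and let U₁, U₂, U₃, U₄, U₅ : Y → M_n(ℂ) be continuous mappings such that for every y ∈ Y the matrices U₁(y), U₃(y), U₅(y) are upper unitriangular and U₂(y), U₄(y) are lower unitriangular. Then there exist continuous mappings A, B, C : Y → M_n(ℂ) with A(y), B(y), C(y) nilpotent for every y, such that U₁(y)·U₂(y)·U₃(y)·U₄(y)·U₅(y) = exp(A(y))·exp(B(y))·exp(C(y)) for all y ∈ Y. -/

import Mathlib

open Polynomial Finset


noncomputable def lpQ (m : ℕ) : ℚ[X] :=
  ∑ k ∈ Finset.range (m+1), C ((-1 : ℚ)^(k+1) / (k : ℚ)) * X^k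

noncomputable def epQ (m : ℕ) : ℚ[X] :=
  ∑ j ∈ Finset.range (m+1), C ((j.factorial : ℚ)⁻¹) * X^j

lemma epQ_succ (m : ℕ) : epQ (m+1) = epQ m + C (((m+1).factorial : ℚ)⁻¹) * X^(m+1) :=
  Finset.sum_range_succ _ _

lemma lpQ_coeff_zero (m : ℕ) : (lpQ m).coeff 0 = 0 := by
  simp [lpQ, Polynomial.finset_sum_coeff, coeff_C_mul, coeff_X_pow]

lemma X_dvd_lpQ (m : ℕ) : X ∣ lpQ m := X_dvd_iff.mpr (lpQ_coeff_zero m)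

lemma deriv_epQ (m : ℕ) : derivative (epQ m) = epQ m - C ((m.factorial : ℚ)⁻¹) * X^m := by
  induction m with
  | zero => simp [epQ]
  | succ m ih =>
      rw [epQ_succ, derivative_add, ih, derivative_C_mul_X_pow]
      rw [show (m + 1 - 1) = m from rfl]
      have hc : (((m+1).factorial : ℚ))⁻¹ * ((m+1 : ℕ) : ℚ) = (m.factorial : ℚ)⁻¹ := by
        have hm : ((m:ℚ)+1) ≠ 0 := by positivity
        have hf : (m.factorial : ℚ) ≠ 0 := Nat.cast_ne_zero.mpr m.factorial_ne_zero
        rw [show (((m+1).factorial : ℚ)) = ((m:ℚ)+1) * (m.factorial : ℚ) by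
          push_cast [Nat.factorial_succ]; ring]
        push_cast
        field_simp
      rw [hc]
      ring
lemma lpQ_succ (m : ℕ) :
    lpQ (m+1) = lpQ m + C ((-1 : ℚ)^(m+2) / ((m+1 : ℕ) : ℚ)) * X^(m+1) :=
  Finset.sum_range_succ _ _

lemma deriv_lpQ (m : ℕ) :
    derivative (lpQ m) = (∑ k ∈ Finset.range (m+1), (-X : ℚ[X])^k) - (-X)^m := by
  induction m with
  | zero => simp [lpQ]
  | succ m ih =>
      rw [lpQ_succ, derivative_add, ih, derivative_C_mul_X_pow,
        Finset.sum_range_succ _ (m+1)]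
      rw [show (m + 1 - 1) = m from rfl]
      have hm : (((m+1:ℕ)) : ℚ) ≠ 0 := by positivity
      have hc : ((-1 : ℚ)^(m+2) / ((m+1 : ℕ) : ℚ)) * ((m+1 : ℕ) : ℚ) = (-1:ℚ)^m := by
        field_simp
        ring
      rw [hc]
      have hnp : ∀ j : ℕ, (-X : ℚ[X])^j = C ((-1:ℚ)^j) * X^j := by
        intro j
        rw [neg_pow]
        simp [C_1, map_pow]
      rw [hnp m, hnp (m+1)]
      ring

lemma coeff_vanish (q : ℚ[X]) (t : ℕ) (h0 : q.coeff 0 = 0)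
    (h : (X : ℚ[X])^t ∣ (1+X) * derivative q - q) : (X : ℚ[X])^(t+1) ∣ q := by
  rw [X_pow_dvd_iff] at h ⊢
  have key : ∀ d, d ≤ t → q.coeff d = 0 := by
    intro d
    induction d with
    | zero => intro _; exact h0
    | succ j ih =>
        intro hj
        have hqj : q.coeff j = 0 := ih (Nat.le_of_succ_le hj)
        have hHj := h j hj
        have hexp : ((1+X) * derivative q - q).coeff j
            = (derivative q).coeff j + (X * derivative q).coeff j - q.coeff j := by
          rw [add_mul, one_mul, coeff_sub, coeff_add]
        rw [hexp, hqj, coeff_derivative] at hHj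
        cases j with
        | zero =>
            rw [mul_coeff_zero, coeff_X_zero, zero_mul] at hHj
            simpa using hHj
        | succ i =>
            rw [coeff_X_mul, coeff_derivative] at hHj
            rw [show i + 1 = Nat.succ i from rfl] at hqj
            rw [hqj, zero_mul, add_zero, sub_zero] at hHj
            have hne : ((i:ℚ) + 1 + 1) ≠ 0 := by positivity
            have := mul_eq_zero.mp hHj
            rcases this with h' | h'
            · exact h'
            · exact absurd (by push_cast at h' ⊢; linarith [h'] : False) (fun x => x)
  intro d hd
  exact key d (Nat.lt_succ_iff.mp hd)

lemma epQ_coeff_zero (m : ℕ) : (epQ m).coeff 0 = 1 := by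
  rw [epQ, Polynomial.finset_sum_coeff, Finset.sum_eq_single 0]
  · simp
  · intro b _ hb
    simp [coeff_C_mul, coeff_X_pow, Ne.symm hb]
  · simp

lemma key_dvd (m : ℕ) :
    (X : ℚ[X])^(m+1) ∣ (epQ m).comp (lpQ m) - (1 + X) := by
  set c : ℚ := (m.factorial : ℚ)⁻¹ with hc
  set ℓ : ℚ[X] := lpQ m with hℓ
  set F : ℚ[X] := (epQ m).comp ℓ with hFdef
  -- (1+X) * ℓ' = 1 + X^m * r
  obtain ⟨r, hr⟩ : ∃ r, (1+X) * derivative ℓ = 1 + X^m * r := by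
    refine ⟨-((-1:ℚ[X])^(m+1)) * X - (-1)^m - (-1)^m * X, ?_⟩
    rw [hℓ, deriv_lpQ]
    have hg := geom_sum_mul (-(X : ℚ[X])) (m+1)
    have h1 : ((1:ℚ[X])+X) = -((-X) - 1) := by ring
    calc (1+X) * ((∑ k ∈ Finset.range (m+1), (-X : ℚ[X])^k) - (-X)^m)
        = -(((∑ k ∈ Finset.range (m+1), (-X:ℚ[X])^k) * ((-X) - 1))) - (1+X)*(-X)^m := by ring
      _ = -((-X)^(m+1) - 1) - (1+X)*(-X)^m := by rw [hg]
      _ = 1 + X^m * (-((-1:ℚ[X])^(m+1)) * X - (-1)^m - (-1)^m * X) := by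
          rw [neg_pow, neg_pow]; ring
  obtain ⟨s, hs⟩ : ∃ s, ℓ^m = X^m * s := pow_dvd_pow_of_dvd (X_dvd_lpQ m) m
  have hF' : derivative F = derivative ℓ * (F - C c * ℓ^m) := by
    rw [hFdef, derivative_comp, deriv_epQ, sub_comp, mul_comp, C_comp, pow_comp, X_comp]
  have hH : (X:ℚ[X])^m ∣ (1+X) * derivative (F - (1+X)) - (F - (1+X)) := by
    refine ⟨r * (F - C c * ℓ^m) - C c * s, ?_⟩
    have hd1 : derivative (F - (1+X)) = derivative F - 1 := by
      rw [derivative_sub, derivative_add, derivative_one, derivative_X, zero_add]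
    rw [hd1, hF']
    linear_combination (F - C c * ℓ^m) * hr - (C c) * hs
  have h0 : (F - (1+X)).coeff 0 = 0 := by
    rw [coeff_sub, coeff_zero_eq_eval_zero, hFdef, eval_comp]
    have : eval 0 ℓ = 0 := by rw [← coeff_zero_eq_eval_zero, hℓ, lpQ_coeff_zero]
    rw [this, ← coeff_zero_eq_eval_zero, epQ_coeff_zero]
    simp
  exact coeff_vanish _ m h0 hH

noncomputable def logM {d : ℕ} (m : ℕ) (N : Matrix (Fin d) (Fin d) ℂ) :
    Matrix (Fin d) (Fin d) ℂ :=
  ∑ k ∈ Finset.range (m+1), ((-1 : ℂ)^(k+1) / (k : ℂ)) • N^k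

lemma logM_eq_aeval {d : ℕ} (m : ℕ) (N : Matrix (Fin d) (Fin d) ℂ) :
    logM m N = aeval N ((lpQ m).map (algebraMap ℚ ℂ)) := by
  rw [logM, lpQ, Polynomial.map_sum, map_sum]
  refine Finset.sum_congr rfl fun k _ => ?_
  have hφ : (algebraMap ℚ ℂ) ((-1 : ℚ)^(k+1) / (k : ℚ)) = (-1 : ℂ)^(k+1) / (k : ℂ) := by
    rw [map_div₀, map_pow, map_neg, map_one, map_natCast]
  rw [Polynomial.map_mul, Polynomial.map_C, Polynomial.map_pow, Polynomial.map_X,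
    map_mul, map_pow, aeval_C, aeval_X, hφ, Algebra.smul_def]

lemma exp_log_mat {d m : ℕ} (N : Matrix (Fin d) (Fin d) ℂ) (hN : N^(m+1) = 0) :
    NormedSpace.exp (logM m N) = 1 + N ∧ (logM m N)^(m+1) = 0 := by
  set φ := algebraMap ℚ ℂ
  set L := logM m N with hLdef
  have hL : L = aeval N ((lpQ m).map φ) := logM_eq_aeval m N
  obtain ⟨rr, hrr⟩ := X_dvd_lpQ m
  have hLpow : L^(m+1) = 0 := by
    rw [hL, ← map_pow]
    rw [show ((lpQ m).map φ)^(m+1) = ((lpQ m)^(m+1)).map φ by rw [Polynomial.map_pow]]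
    rw [hrr, mul_pow, Polynomial.map_mul, Polynomial.map_pow, Polynomial.map_X, map_mul,
      map_pow, aeval_X, hN, zero_mul]
  refine ⟨?_, hLpow⟩
  have hLk0 : ∀ j, m+1 ≤ j → L^j = 0 := fun j hj => pow_eq_zero_of_le hj hLpow
  simp only [NormedSpace.exp_eq_tsum ℂ]
  rw [tsum_eq_sum (s := Finset.range (m+1))
    (fun j hj => by rw [hLk0 j (le_of_not_gt fun h => hj (Finset.mem_range.mpr h)), smul_zero])]
  have hsum : ∑ j ∈ Finset.range (m+1), ((j.factorial : ℂ))⁻¹ • L^j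
      = aeval L ((epQ m).map φ) := by
    rw [epQ, Polynomial.map_sum, map_sum]
    refine Finset.sum_congr rfl fun j _ => ?_
    have hφ : (algebraMap ℚ ℂ) ((j.factorial : ℚ)⁻¹) = ((j.factorial : ℂ))⁻¹ := by
      rw [map_inv₀, map_natCast]
    rw [Polynomial.map_mul, Polynomial.map_C, Polynomial.map_pow, Polynomial.map_X,
      map_mul, map_pow, aeval_C, aeval_X, hφ, Algebra.smul_def]
  rw [hsum, hL, ← aeval_comp, ← Polynomial.map_comp]
  obtain ⟨Q, hQ⟩ := key_dvd m
  have : (epQ m).comp (lpQ m) = 1 + X + X^(m+1) * Q := by linear_combination hQ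
  rw [this]
  rw [Polynomial.map_add, Polynomial.map_add, Polynomial.map_one, Polynomial.map_mul,
    Polynomial.map_pow, Polynomial.map_X, map_add, map_add, map_one, aeval_X, map_mul,
    map_pow, aeval_X, hN, zero_mul, add_zero]

/-- `M` is lower unitriangular. -/
def IsLowerUnitriangular {m : ℕ} (M : Matrix (Fin m) (Fin m) ℂ) : Prop :=
  (∀ i, M i i = 1) ∧ ∀ i j : Fin m, i < j → M i j = 0

/-- `M` is upper unitriangular. -/
def IsUpperUnitriangular {m : ℕ} (M : Matrix (Fin m) (Fin m) ℂ) : Prop :=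
  (∀ i, M i i = 1) ∧ ∀ i j : Fin m, j < i → M i j = 0


lemma strictUpper_pow {d : ℕ} (M : Matrix (Fin d) (Fin d) ℂ)
    (h : ∀ i j : Fin d, (j : ℕ) ≤ (i : ℕ) → M i j = 0) : M ^ d = 0 := by
  have key : ∀ k, ∀ i j : Fin d, (j : ℕ) < (i : ℕ) + k → (M ^ k) i j = 0 := by
    intro k
    induction k with
    | zero =>
        intro i j hij
        rw [pow_zero]
        exact Matrix.one_apply_ne (by
          intro hh; rw [hh] at hij; omega)
    | succ k ih =>
        intro i j hij
        rw [pow_succ', Matrix.mul_apply]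
        refine Finset.sum_eq_zero fun l _ => ?_
        by_cases hl : (l : ℕ) ≤ (i : ℕ)
        · rw [h i l hl, zero_mul]
        · rw [ih l j (by omega), mul_zero]
  ext i j
  have := key d i j (by omega)
  simpa using this

lemma strictLower_pow {d : ℕ} (M : Matrix (Fin d) (Fin d) ℂ)
    (h : ∀ i j : Fin d, (i : ℕ) ≤ (j : ℕ) → M i j = 0) : M ^ d = 0 := by
  have key : ∀ k, ∀ i j : Fin d, (i : ℕ) < (j : ℕ) + k → (M ^ k) i j = 0 := by
    intro k
    induction k with
    | zero =>
        intro i j hij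
        rw [pow_zero]
        exact Matrix.one_apply_ne (by intro hh; rw [hh] at hij; omega)
    | succ k ih =>
        intro i j hij
        rw [pow_succ, Matrix.mul_apply]
        refine Finset.sum_eq_zero fun l _ => ?_
        by_cases hl : (l : ℕ) ≤ (j : ℕ)
        · rw [h l j hl, mul_zero]
        · rw [ih i l (by omega), zero_mul]
  ext i j
  have := key d i j (by omega)
  simpa using this

lemma upper_sub_one_pow {d : ℕ} {U : Matrix (Fin d) (Fin d) ℂ}
    (hU : IsUpperUnitriangular U) : (U - 1) ^ d = 0 := by
  apply strictUpper_pow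
  intro i j hij
  rcases eq_or_lt_of_le hij with heq | hlt
  · have : j = i := Fin.ext heq
    subst this
    simp [Matrix.sub_apply, hU.1 j]
  · have hne : i ≠ j := by intro hh; subst hh; omega
    simp [Matrix.sub_apply, hU.2 i j (by exact Fin.lt_def.mpr hlt), Matrix.one_apply_ne hne]

lemma lower_sub_one_pow {d : ℕ} {U : Matrix (Fin d) (Fin d) ℂ}
    (hU : IsLowerUnitriangular U) : (U - 1) ^ d = 0 := by
  apply strictLower_pow
  intro i j hij
  rcases eq_or_lt_of_le hij with heq | hlt
  · have : i = j := Fin.ext heq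
    subst this
    simp [Matrix.sub_apply, hU.1 i]
  · have hne : i ≠ j := by intro hh; subst hh; omega
    simp [Matrix.sub_apply, hU.2 i j (by exact Fin.lt_def.mpr hlt), Matrix.one_apply_ne hne]

lemma upper_mul {d : ℕ} {A B : Matrix (Fin d) (Fin d) ℂ}
    (hA : IsUpperUnitriangular A) (hB : IsUpperUnitriangular B) :
    IsUpperUnitriangular (A * B) := by
  constructor
  · intro i
    rw [Matrix.mul_apply, Finset.sum_eq_single i]
    · rw [hA.1 i, hB.1 i, one_mul]
    · intro k _ hk
      rcases lt_or_gt_of_ne hk with h | h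
      · rw [hA.2 i k h, zero_mul]
      · rw [hB.2 k i h, mul_zero]
    · simp
  · intro i j hij
    rw [Matrix.mul_apply]
    refine Finset.sum_eq_zero fun k _ => ?_
    by_cases hk : k < i
    · rw [hA.2 i k hk, zero_mul]
    · have : j < k := lt_of_lt_of_le hij (not_lt.mp hk)
      rw [hB.2 k j this, mul_zero]

-- geometric-sum inverse of a unipotent matrix
lemma unipotent_inv {d : ℕ} {U : Matrix (Fin d) (Fin d) ℂ} (h : (1 - U) ^ d = 0) :
    U * (∑ k ∈ Finset.range d, (1 - U) ^ k) = 1 ∧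
    (∑ k ∈ Finset.range d, (1 - U) ^ k) * U = 1 := by
  have h1 := geom_sum_mul (1 - U) d
  have h2 := mul_geom_sum (1 - U) d
  rw [h] at h1 h2
  constructor
  · have : U * (∑ k ∈ Finset.range d, (1 - U) ^ k)
        = -(((1 - U) - 1) * ∑ k ∈ Finset.range d, (1 - U) ^ k) := by noncomm_ring
    rw [this, h2]; noncomm_ring
  · have : (∑ k ∈ Finset.range d, (1 - U) ^ k) * U
        = -((∑ k ∈ Finset.range d, (1 - U) ^ k) * ((1 - U) - 1)) := by noncomm_ring
    rw [this, h1]; noncomm_ring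

lemma conj_pow_zero {d m : ℕ} {P Q M : Matrix (Fin d) (Fin d) ℂ}
    (hPQ : P * Q = 1) (hQP : Q * P = 1) (hM : M ^ (m+1) = 0) :
    (P * M * Q) ^ (m+1) = 0 := by
  have key : ∀ k, (P * M * Q) ^ (k+1) = P * M ^ (k+1) * Q := by
    intro k
    induction k with
    | zero => simp
    | succ k ih =>
        rw [pow_succ, ih]
        calc P * M ^ (k+1) * Q * (P * M * Q)
            = P * M ^ (k+1) * (Q * P) * M * Q := by noncomm_ring
          _ = P * M ^ (k+1+1) * Q := by rw [hQP]; noncomm_ring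
          _ = _ := by rw [pow_succ]
  rw [key m, hM, mul_zero, zero_mul]



/-- A continuous product of five alternately upper/lower unitriangular matrix-valued maps
is a product of three exponentials of continuous nilpotent-valued maps. -/
theorem stmt9 {Y : Type*} [TopologicalSpace Y] (n : ℕ) (hn : 1 ≤ n)
    (U₁ U₂ U₃ U₄ U₅ : Y → Matrix (Fin n) (Fin n) ℂ)
    (hc₁ : Continuous U₁) (hc₂ : Continuous U₂) (hc₃ : Continuous U₃)
    (hc₄ : Continuous U₄) (hc₅ : Continuous U₅)
    (hu₁ : ∀ y, IsUpperUnitriangular (U₁ y))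
    (hu₂ : ∀ y, IsLowerUnitriangular (U₂ y))
    (hu₃ : ∀ y, IsUpperUnitriangular (U₃ y))
    (hu₄ : ∀ y, IsLowerUnitriangular (U₄ y))
    (hu₅ : ∀ y, IsUpperUnitriangular (U₅ y)) :
    ∃ A B C : Y → Matrix (Fin n) (Fin n) ℂ,
      Continuous A ∧ Continuous B ∧ Continuous C ∧
      (∀ y, IsNilpotent (A y)) ∧ (∀ y, IsNilpotent (B y)) ∧ (∀ y, IsNilpotent (C y)) ∧
      (∀ y, U₁ y * U₂ y * U₃ y * U₄ y * U₅ y =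
        NormedSpace.exp (A y) * NormedSpace.exp (B y) * NormedSpace.exp (C y)) := by
  obtain ⟨m, rfl⟩ : ∃ m, n = m + 1 := ⟨n - 1, by omega⟩
  -- inverses of U₁ and U₃
  set V₁ : Y → Matrix (Fin (m+1)) (Fin (m+1)) ℂ :=
    fun y => ∑ k ∈ Finset.range (m+1), (1 - U₁ y) ^ k with hV₁def
  set V₃ : Y → Matrix (Fin (m+1)) (Fin (m+1)) ℂ :=
    fun y => ∑ k ∈ Finset.range (m+1), (1 - U₃ y) ^ k with hV₃def
  have hinv : ∀ (U : Y → Matrix (Fin (m+1)) (Fin (m+1)) ℂ),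
      (∀ y, IsUpperUnitriangular (U y)) → ∀ y,
      U y * (∑ k ∈ Finset.range (m+1), (1 - U y) ^ k) = 1 ∧
      (∑ k ∈ Finset.range (m+1), (1 - U y) ^ k) * U y = 1 := by
    intro U hU y
    apply unipotent_inv
    have h1 : (1 - U y) = -(U y - 1) := by noncomm_ring
    rw [h1, neg_pow, upper_sub_one_pow (hU y), mul_zero]
  have hV₁ := hinv U₁ hu₁
  have hV₃ := hinv U₃ hu₃
  -- the three unipotent factors
  set W₁ : Y → Matrix (Fin (m+1)) (Fin (m+1)) ℂ := fun y => U₁ y * U₂ y * V₁ y with hW₁def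
  set W₂ : Y → Matrix (Fin (m+1)) (Fin (m+1)) ℂ :=
    fun y => (U₁ y * U₃ y) * U₄ y * (V₃ y * V₁ y) with hW₂def
  set W₃ : Y → Matrix (Fin (m+1)) (Fin (m+1)) ℂ := fun y => U₁ y * U₃ y * U₅ y with hW₃def
  -- nilpotency of W_i - 1
  have hN₁ : ∀ y, (W₁ y - 1) ^ (m+1) = 0 := by
    intro y
    have e : W₁ y - 1 = U₁ y * (U₂ y - 1) * V₁ y := by
      have h2 : U₁ y * (U₂ y - 1) * V₁ y = U₁ y * U₂ y * V₁ y - U₁ y * V₁ y := by noncomm_ring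
      rw [h2, (hV₁ y).1, hW₁def]
    rw [e]
    exact conj_pow_zero (hV₁ y).1 (hV₁ y).2 (lower_sub_one_pow (hu₂ y))
  have hPQ : ∀ y, (U₁ y * U₃ y) * (V₃ y * V₁ y) = 1 := by
    intro y
    calc (U₁ y * U₃ y) * (V₃ y * V₁ y) = U₁ y * (U₃ y * V₃ y) * V₁ y := by noncomm_ring
      _ = 1 := by rw [(hV₃ y).1, mul_one, (hV₁ y).1]
  have hQP : ∀ y, (V₃ y * V₁ y) * (U₁ y * U₃ y) = 1 := by
    intro y
    calc (V₃ y * V₁ y) * (U₁ y * U₃ y) = V₃ y * (V₁ y * U₁ y) * U₃ y := by noncomm_ring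
      _ = 1 := by rw [(hV₁ y).2, mul_one, (hV₃ y).2]
  have hN₂ : ∀ y, (W₂ y - 1) ^ (m+1) = 0 := by
    intro y
    have e : W₂ y - 1 = (U₁ y * U₃ y) * (U₄ y - 1) * (V₃ y * V₁ y) := by
      have h2 : (U₁ y * U₃ y) * (U₄ y - 1) * (V₃ y * V₁ y)
          = (U₁ y * U₃ y) * U₄ y * (V₃ y * V₁ y) - (U₁ y * U₃ y) * (V₃ y * V₁ y) := by
        noncomm_ring
      rw [h2, hPQ y, hW₂def]
    rw [e]
    exact conj_pow_zero (hPQ y) (hQP y) (lower_sub_one_pow (hu₄ y))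
  have hN₃ : ∀ y, (W₃ y - 1) ^ (m+1) = 0 := fun y =>
    upper_sub_one_pow (upper_mul (upper_mul (hu₁ y) (hu₃ y)) (hu₅ y))
  -- logarithms
  refine ⟨fun y => logM m (W₁ y - 1), fun y => logM m (W₂ y - 1), fun y => logM m (W₃ y - 1),
    ?_, ?_, ?_, ?_, ?_, ?_, ?_⟩
  · have hcV₁ : Continuous V₁ := continuous_finset_sum _ fun k _ => (continuous_const.sub hc₁).pow k
    exact continuous_finset_sum _ fun k _ =>
      (Continuous.const_smul (c := (-1 : ℂ)^(k+1) / (k : ℂ)) (g := fun y => (W₁ y - 1) ^ k) ((((hc₁.mul hc₂).mul hcV₁).sub continuous_const).pow k))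
  · have hcV₁ : Continuous V₁ := continuous_finset_sum _ fun k _ => (continuous_const.sub hc₁).pow k
    have hcV₃ : Continuous V₃ := continuous_finset_sum _ fun k _ => (continuous_const.sub hc₃).pow k
    exact continuous_finset_sum _ fun k _ =>
      Continuous.const_smul (c := (-1 : ℂ)^(k+1) / (k : ℂ)) (g := fun y => (W₂ y - 1) ^ k) (((((hc₁.mul hc₃).mul hc₄).mul (hcV₃.mul hcV₁)).sub continuous_const).pow k)
  · exact continuous_finset_sum _ fun k _ =>
      Continuous.const_smul (c := (-1 : ℂ)^(k+1) / (k : ℂ)) (g := fun y => (W₃ y - 1) ^ k) ((((hc₁.mul hc₃).mul hc₅).sub continuous_const).pow k)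
  · exact fun y => ⟨m+1, (exp_log_mat _ (hN₁ y)).2⟩
  · exact fun y => ⟨m+1, (exp_log_mat _ (hN₂ y)).2⟩
  · exact fun y => ⟨m+1, (exp_log_mat _ (hN₃ y)).2⟩
  · intro y
    have e1 : NormedSpace.exp (logM m (W₁ y - 1)) = W₁ y := by
      rw [(exp_log_mat _ (hN₁ y)).1]; noncomm_ring
    have e2 : NormedSpace.exp (logM m (W₂ y - 1)) = W₂ y := by
      rw [(exp_log_mat _ (hN₂ y)).1]; noncomm_ring
    have e3 : NormedSpace.exp (logM m (W₃ y - 1)) = W₃ y := by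
      rw [(exp_log_mat _ (hN₃ y)).1]; noncomm_ring
    rw [e1, e2, e3, hW₁def, hW₂def, hW₃def]
    have r1 : ∀ T, V₁ y * (U₁ y * T) = T := by
      intro T; rw [← mul_assoc, (hV₁ y).2, one_mul]
    have r3 : ∀ T, V₃ y * (U₃ y * T) = T := by
      intro T; rw [← mul_assoc, (hV₃ y).2, one_mul]
    simp only [mul_assoc]
    rw [r1, r1, r3]
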